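/- The unique even formal power series solution f(t) = 1 + O(t²) in even powers of t of the ODE t(16 - t²) f'''(t) + 2(16 - 3t²) f''(t) + (4ν² - 7) t f'(t) + (4ν² - 1) f(t) = 0 is the Gauss hypergeometric series f(t) = ₂F₁(1/2 - ν, 1/2 + ν; 1; t²/16) = Σ_{k≥0} ((1/2-ν)_k (1/2+ν)_k / (k!)²) t^{2k}/16^k. -/

import Mathlib

open PowerSeries

/-- The predicate that a formal power series `f(t)` satisfies the ODE
`t(16 - t²) f''' + 2(16 - 3t²) f'' + (4ν² - 7) t f' + (4ν² - 1) f = 0`. -/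
noncomputable def SatisfiesODE (ν : ℝ) (f : PowerSeries ℝ) : Prop :=
  X * (C (R := ℝ) 16 - X ^ 2) * derivativeFun (derivativeFun (derivativeFun f))
    + C (R := ℝ) 2 * (C (R := ℝ) 16 - C (R := ℝ) 3 * X ^ 2) * derivativeFun (derivativeFun f)
    + C (R := ℝ) (4 * ν ^ 2 - 7) * X * derivativeFun f
    + C (R := ℝ) (4 * ν ^ 2 - 1) * f = 0

/-- The hypergeometric series `₂F₁(1/2-ν, 1/2+ν; 1; t²/16)
= Σ_{k≥0} ((1/2-ν)_k (1/2+ν)_k /(k!)²) t^{2k}/16^k` as a formal power series in `t`. -/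
noncomputable def hypergeomSeries (ν : ℝ) : PowerSeries ℝ :=
  PowerSeries.mk fun n =>
    if n % 2 = 0 then
      (ascPochhammer ℝ (n / 2)).eval (1 / 2 - ν) * (ascPochhammer ℝ (n / 2)).eval (1 / 2 + ν)
        / (((n / 2).factorial : ℝ) ^ 2 * 16 ^ (n / 2))
    else 0

/-- The coefficient of `t^{2k}` in the hypergeometric series. -/
noncomputable def hb (ν : ℝ) (k : ℕ) : ℝ :=
  (ascPochhammer ℝ k).eval (1 / 2 - ν) * (ascPochhammer ℝ k).eval (1 / 2 + ν)
    / ((k.factorial : ℝ) ^ 2 * 16 ^ k)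

lemma coeff_hyp_even (ν : ℝ) (k : ℕ) :
    coeff (R := ℝ) (2 * k) (hypergeomSeries ν) = hb ν k := by
  simp [hypergeomSeries, hb, Nat.mul_mod_right, Nat.mul_div_cancel_left]

lemma coeff_hyp_odd (ν : ℝ) (n : ℕ) (h : Odd n) :
    coeff (R := ℝ) n (hypergeomSeries ν) = 0 := by
  have : n % 2 = 1 := Nat.odd_iff.mp h
  simp [hypergeomSeries, this]

lemma hb_zero (ν : ℝ) : hb ν 0 = 1 := by
  simp [hb]

lemma hb_rec (ν : ℝ) (k : ℕ) :
    16 * (2 * (k : ℝ) + 1) * (2 * (k : ℝ) + 2) ^ 2 * hb ν (k + 1)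
      = (2 * (k : ℝ) + 1) * ((2 * (k : ℝ) + 1) ^ 2 - 4 * ν ^ 2) * hb ν k := by
  have h1 : ((k.factorial : ℝ)) ≠ 0 := Nat.cast_ne_zero.2 k.factorial_ne_zero
  have h2 : (16 : ℝ) ^ k ≠ 0 := by positivity
  have h3 : ((k : ℝ) + 1) ≠ 0 := by positivity
  simp only [hb, ascPochhammer_succ_eval, Nat.factorial_succ]
  push_cast
  field_simp
  ring

lemma coeff_derivativeFun' (f : PowerSeries ℝ) (n : ℕ) :
    coeff (R := ℝ) n (derivativeFun f) = coeff (R := ℝ) (n + 1) f * (n + 1) :=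
  coeff_derivative f n

lemma constantCoeff_derivativeFun' (f : PowerSeries ℝ) :
    constantCoeff (derivativeFun f) = coeff (R := ℝ) 1 f := by
  rw [← coeff_zero_eq_constantCoeff_apply, coeff_derivativeFun']; simp

/-- The coefficient recurrence equivalent to the ODE. -/
def RecRel (ν : ℝ) (f : PowerSeries ℝ) : Prop :=
  ∀ n : ℕ, 16 * ((n : ℝ) + 1) * ((n : ℝ) + 2) ^ 2 * coeff (R := ℝ) (n + 2) f
    = ((n : ℝ) + 1) * (((n : ℝ) + 1) ^ 2 - 4 * ν ^ 2) * coeff (R := ℝ) n f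

lemma ode_iff_rec (ν : ℝ) (f : PowerSeries ℝ) :
    SatisfiesODE ν f ↔ RecRel ν f := by
  rw [SatisfiesODE]
  have hE : X * (C (R := ℝ) 16 - X ^ 2) * derivativeFun (derivativeFun (derivativeFun f))
      + C (R := ℝ) 2 * (C (R := ℝ) 16 - C (R := ℝ) 3 * X ^ 2) * derivativeFun (derivativeFun f)
      + C (R := ℝ) (4 * ν ^ 2 - 7) * X * derivativeFun f
      + C (R := ℝ) (4 * ν ^ 2 - 1) * f
      = C (R := ℝ) 16 * (derivativeFun (derivativeFun (derivativeFun f)) * X ^ 1)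
        + C (R := ℝ) (-1) * (derivativeFun (derivativeFun (derivativeFun f)) * X ^ 3)
        + C (R := ℝ) 32 * derivativeFun (derivativeFun f)
        + C (R := ℝ) (-6) * (derivativeFun (derivativeFun f) * X ^ 2)
        + C (R := ℝ) (4 * ν ^ 2 - 7) * (derivativeFun f * X ^ 1)
        + C (R := ℝ) (4 * ν ^ 2 - 1) * f := by
    have h32 : (C (R := ℝ) 32 : PowerSeries ℝ) = C (R := ℝ) 2 * C (R := ℝ) 16 := by
      rw [← map_mul]; norm_num
    have hm6 : (C (R := ℝ) (-6) : PowerSeries ℝ) = -(C (R := ℝ) 2 * C (R := ℝ) 3) := by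
      rw [← map_mul, ← map_neg]; norm_num
    have hm1 : (C (R := ℝ) (-1) : PowerSeries ℝ) = -1 := by
      rw [show ((-1:ℝ)) = -(1:ℝ) by norm_num, map_neg, map_one]
    rw [h32, hm6, hm1]; ring
  rw [hE, PowerSeries.ext_iff, RecRel]
  apply forall_congr'
  intro n
  simp only [map_add, coeff_C_mul, coeff_mul_X_pow', map_zero]
  rcases n with _ | _ | _ | m
  · norm_num [coeff_derivativeFun', constantCoeff_derivativeFun']
    constructor <;> intro h <;> linear_combination h
  · norm_num [coeff_derivativeFun', constantCoeff_derivativeFun']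
    constructor <;> intro h <;> linear_combination h
  · norm_num [coeff_derivativeFun', constantCoeff_derivativeFun']
    constructor <;> intro h <;> linear_combination h
  · have e1 : (1 : ℕ) ≤ m + 3 := by omega
    have e2 : (2 : ℕ) ≤ m + 3 := by omega
    have e3 : (3 : ℕ) ≤ m + 3 := by omega
    rw [if_pos e1, if_pos e2, if_pos e3]
    have d1 : m + 3 - 1 = m + 2 := by omega
    have d2 : m + 3 - 2 = m + 1 := by omega
    have d3 : m + 3 - 3 = m := by omega
    rw [d1, d2, d3]
    simp only [coeff_derivativeFun']
    push_cast
    constructor <;> intro h <;> linear_combination h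

lemma hyp_rec (ν : ℝ) : RecRel ν (hypergeomSeries ν) := by
  intro n
  rcases Nat.even_or_odd n with he | ho
  · obtain ⟨k, hk⟩ := he
    have hk2 : n = 2 * k := by omega
    subst hk2
    have h1 : 2 * k + 2 = 2 * (k + 1) := by omega
    rw [h1, coeff_hyp_even, coeff_hyp_even]
    push_cast
    linear_combination hb_rec ν k
  · rw [coeff_hyp_odd ν n ho, coeff_hyp_odd ν (n + 2) (by rcases ho with ⟨k, hk⟩; exact ⟨k + 1, by omega⟩)]
    ring

lemma unique_aux (ν : ℝ) (g : PowerSeries ℝ) (hrec : RecRel ν g)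
    (h0 : coeff (R := ℝ) 0 g = 1) (hodd : ∀ n, Odd n → coeff (R := ℝ) n g = 0) :
    g = hypergeomSeries ν := by
  ext n
  induction n using Nat.strong_induction_on with
  | _ n ih =>
    rcases Nat.even_or_odd n with he | ho
    · obtain ⟨k, hk⟩ := he
      have hk2 : n = 2 * k := by omega
      subst hk2
      rcases k with _ | k
      · rw [coeff_hyp_even, hb_zero]
        simpa using h0
      · have h1 := hrec (2 * k)
        have h2 := hyp_rec ν (2 * k)
        have h3 : coeff (R := ℝ) (2 * k) g = coeff (R := ℝ) (2 * k) (hypergeomSeries ν) :=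
          ih (2 * k) (by omega)
        have hne : (16 : ℝ) * ((2 * k : ℕ) + 1) * ((2 * k : ℕ) + 2) ^ 2 ≠ 0 := by
          positivity
        have heq : 2 * (k + 1) = 2 * k + 2 := by omega
        rw [heq]
        apply mul_left_cancel₀ hne
        rw [h1, h2, h3]
    · rw [hodd n ho, coeff_hyp_odd ν n ho]

/-- The hypergeometric series `₂F₁(1/2-ν, 1/2+ν; 1; t²/16)` satisfies the ODE
`t(16-t²)f''' + 2(16-3t²)f'' + (4ν²-7)t f' + (4ν²-1)f = 0`, has constant term `1`, is even,
and is the unique even formal power series solution with constant term `1`. -/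
theorem hypergeom_unique_even_solution (ν : ℝ) :
    (SatisfiesODE ν (hypergeomSeries ν) ∧ coeff (R := ℝ) 0 (hypergeomSeries ν) = 1 ∧
      ∀ n, Odd n → coeff (R := ℝ) n (hypergeomSeries ν) = 0) ∧
    ∀ g : PowerSeries ℝ, SatisfiesODE ν g → coeff (R := ℝ) 0 g = 1 →
      (∀ n, Odd n → coeff (R := ℝ) n g = 0) → g = hypergeomSeries ν := by
  refine ⟨⟨(ode_iff_rec ν _).mpr (hyp_rec ν), ?_, fun n hn => coeff_hyp_odd ν n hn⟩,
    fun g hg h0 hodd => unique_aux ν g ((ode_iff_rec ν g).mp hg) h0 hodd⟩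
  have := coeff_hyp_even ν 0
  simpa [hb_zero] using this
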